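/- Let X and Y be independent standard normal random variables. Then for κ ∈ (0,1), E[exp(κ|XY|)] = 4∫₀^∞ (1/√(2π))·exp{−(1/2)(1−κ²)x²}·Φ(κx) dx, and this quantity is finite; moreover E[exp(κ|XY|)] = +∞ when κ ≥ 1. -/
import Mathlib

open Real MeasureTheory ProbabilityTheory

/-- The standard normal cumulative distribution function. -/
noncomputable def stdNormalCDF (x : ℝ) : ℝ :=
  ∫ t in Set.Iic x, (1 / Real.sqrt (2 * π)) * Real.exp (-t ^ 2 / 2)

namespace StdNormalAux

noncomputable def npdf (t : ℝ) : ℝ := (1 / Real.sqrt (2 * π)) * Real.exp (-t ^ 2 / 2)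

lemma npdf_nonneg (t : ℝ) : 0 ≤ npdf t := by unfold npdf; positivity

lemma npdf_pos (t : ℝ) : 0 < npdf t := by unfold npdf; positivity

lemma npdf_abs (t : ℝ) : npdf |t| = npdf t := by unfold npdf; rw [sq_abs]

lemma continuous_npdf : Continuous npdf := by unfold npdf; fun_prop

lemma npdf_eq_gaussian : npdf = gaussianPDFReal 0 1 := by
  funext t
  simp [npdf, gaussianPDFReal, one_div]

lemma integrable_npdf : Integrable npdf := by
  rw [npdf_eq_gaussian]; exact integrable_gaussianPDFReal 0 1

lemma integral_npdf : ∫ t, npdf t = 1 := by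
  rw [npdf_eq_gaussian]; exact integral_gaussianPDFReal_eq_one 0 one_ne_zero

lemma stdNormalCDF_eq (a : ℝ) : stdNormalCDF a = ∫ t in Set.Iic a, npdf t := rfl

lemma Phi_nonneg (a : ℝ) : 0 ≤ stdNormalCDF a := by
  rw [stdNormalCDF_eq]
  exact setIntegral_nonneg measurableSet_Iic fun t _ ↦ npdf_nonneg t

lemma Phi_mono : Monotone stdNormalCDF := by
  intro a b hab
  rw [stdNormalCDF_eq, stdNormalCDF_eq]
  exact setIntegral_mono_set integrable_npdf.integrableOn
    (ae_of_all _ npdf_nonneg) (HasSubset.Subset.eventuallyLE (Set.Iic_subset_Iic.mpr hab))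

lemma Phi_le_one (a : ℝ) : stdNormalCDF a ≤ 1 := by
  rw [stdNormalCDF_eq, ← integral_npdf]
  exact setIntegral_le_integral integrable_npdf (ae_of_all _ npdf_nonneg)

lemma Phi_zero_pos : 0 < stdNormalCDF 0 := by
  rw [stdNormalCDF_eq]
  rw [setIntegral_pos_iff_support_of_nonneg_ae (ae_of_all _ npdf_nonneg)
    integrable_npdf.integrableOn]
  have h : Function.support npdf ∩ Set.Iic 0 = Set.Iic 0 := by
    rw [Set.inter_eq_right]
    intro x _
    exact (npdf_pos x).ne'
  rw [h, Real.volume_Iic]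
  simp

lemma measurable_Phi : Measurable stdNormalCDF := Phi_mono.measurable

lemma mul_exp_eq (a y : ℝ) :
    npdf y * Real.exp (a * y) = Real.exp (a ^ 2 / 2) * npdf (y - a) := by
  calc npdf y * Real.exp (a * y) = (1 / Real.sqrt (2 * π)) * Real.exp (-y ^ 2 / 2 + a * y) := by
        rw [npdf, mul_assoc, ← Real.exp_add]
    _ = Real.exp (a ^ 2 / 2) * npdf (y - a) := by
        rw [npdf, show (-y ^ 2 / 2 + a * y) = a ^ 2 / 2 + -(y - a) ^ 2 / 2 by ring,
          Real.exp_add]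
        ring

lemma setIntegral_npdf_sub (a : ℝ) :
    ∫ y in Set.Ioi (0:ℝ), npdf (y - a) = stdNormalCDF a := by
  have h1 : ∫ y in Set.Ioi (0:ℝ), npdf (y - a) = ∫ y in Set.Ioi (-a), npdf y := by
    rw [← integral_indicator measurableSet_Ioi, ← integral_indicator measurableSet_Ioi]
    rw [show (Set.Ioi (0:ℝ)).indicator (fun y ↦ npdf (y - a))
        = fun y ↦ (Set.Ioi (-a)).indicator npdf (y - a) by
      funext y
      by_cases h : y ∈ Set.Ioi (0:ℝ)
      · rw [Set.indicator_of_mem h, Set.indicator_of_mem (by simpa using h)]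
      · rw [Set.indicator_of_notMem h, Set.indicator_of_notMem (by simpa using h)]]
    exact integral_sub_right_eq_self _ a
  have h2 : ∫ y in Set.Ioi (-a), npdf y = ∫ y in Set.Iic a, npdf y := by
    rw [← integral_comp_neg_Iic a npdf]
    refine setIntegral_congr_fun measurableSet_Iic fun y _ ↦ ?_
    unfold npdf; rw [neg_pow]; ring_nf
  rw [h1, h2, stdNormalCDF_eq]

lemma integral_Ioi_npdf_exp (a : ℝ) :
    ∫ y in Set.Ioi (0:ℝ), npdf y * Real.exp (a * y)
      = Real.exp (a ^ 2 / 2) * stdNormalCDF a := by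
  simp_rw [mul_exp_eq]
  rw [MeasureTheory.integral_const_mul, setIntegral_npdf_sub]

end StdNormalAux

namespace StdNormalAux

lemma integrable_npdf_exp_abs (a : ℝ) :
    Integrable (fun y ↦ npdf y * Real.exp (a * |y|)) := by
  refine Integrable.mono'
    (g := fun y ↦ Real.exp (a ^ 2 / 2) * (npdf (y - a) + npdf (y + a)))
    (((integrable_npdf.comp_sub_right a).add (integrable_npdf.comp_add_right a)).const_mul _)
    ((continuous_npdf.mul (by fun_prop)).aestronglyMeasurable) (ae_of_all _ fun y ↦ ?_)
  have hb : npdf y * Real.exp (a * |y|)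
      ≤ Real.exp (a ^ 2 / 2) * (npdf (y - a) + npdf (y + a)) := by
    rcases le_or_gt 0 y with hy | hy
    · rw [abs_of_nonneg hy, mul_exp_eq]
      nlinarith [npdf_nonneg (y + a), Real.exp_pos (a ^ 2 / 2)]
    · rw [abs_of_neg hy, show a * -y = (-a) * y by ring, mul_exp_eq]
      have : (-a : ℝ) ^ 2 / 2 = a ^ 2 / 2 := by ring
      rw [this, sub_neg_eq_add]
      nlinarith [npdf_nonneg (y - a), Real.exp_pos (a ^ 2 / 2)]
  have h1 : 0 ≤ npdf y * Real.exp (a * |y|) :=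
    mul_nonneg (npdf_nonneg y) (Real.exp_pos _).le
  rw [Real.norm_eq_abs, abs_of_nonneg h1]
  exact hb

lemma integral_npdf_exp_abs (a : ℝ) :
    ∫ y, npdf y * Real.exp (a * |y|)
      = 2 * (Real.exp (a ^ 2 / 2) * stdNormalCDF a) := by
  rw [show (fun y ↦ npdf y * Real.exp (a * |y|))
      = (fun y ↦ (fun t ↦ npdf t * Real.exp (a * t)) |y|) from
    funext fun y ↦ by simp only [← npdf_abs y]]
  rw [_root_.integral_comp_abs (f := fun t ↦ npdf t * Real.exp (a * t)),
    integral_Ioi_npdf_exp]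

lemma lintegral_exp_abs_gaussian (a : ℝ) :
    ∫⁻ y, ENNReal.ofReal (Real.exp (a * |y|)) ∂(gaussianReal 0 1)
      = ENNReal.ofReal (2 * (Real.exp (a ^ 2 / 2) * stdNormalCDF a)) := by
  rw [gaussianReal_of_var_ne_zero 0 one_ne_zero,
    lintegral_withDensity_eq_lintegral_mul _ (measurable_gaussianPDF 0 1)
      (by fun_prop : Measurable fun y : ℝ ↦ ENNReal.ofReal (Real.exp (a * |y|)))]
  have : ∀ y : ℝ, (gaussianPDF 0 1 * fun y ↦ ENNReal.ofReal (Real.exp (a * |y|))) y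
      = ENNReal.ofReal (npdf y * Real.exp (a * |y|)) := by
    intro y
    simp only [Pi.mul_apply, gaussianPDF, ← npdf_eq_gaussian]
    rw [← ENNReal.ofReal_mul (npdf_nonneg y)]
  simp_rw [this]
  rw [← ofReal_integral_eq_lintegral_ofReal (integrable_npdf_exp_abs a)
    (ae_of_all _ fun y ↦ mul_nonneg (npdf_nonneg y) (Real.exp_pos _).le),
    integral_npdf_exp_abs]

end StdNormalAux

namespace StdNormalAux

lemma main_reduction (κ : ℝ) :
    (∫⁻ p : ℝ × ℝ, ENNReal.ofReal (Real.exp (κ * |p.1 * p.2|))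
        ∂((gaussianReal 0 1).prod (gaussianReal 0 1)))
      = ∫⁻ x, ENNReal.ofReal
          (npdf x * (2 * (Real.exp ((κ * |x|) ^ 2 / 2) * stdNormalCDF (κ * |x|)))) := by
  have hm : Measurable fun x : ℝ ↦ κ * |x| := measurable_abs.const_mul κ
  have hm2 : Measurable fun x : ℝ ↦
      ENNReal.ofReal (2 * (Real.exp ((κ * |x|) ^ 2 / 2) * stdNormalCDF (κ * |x|))) := by
    exact (((Real.measurable_exp.comp ((hm.pow_const 2).div_const 2)).mul
      (measurable_Phi.comp hm)).const_mul 2).ennreal_ofReal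
  rw [lintegral_prod _ (by fun_prop :
    Measurable fun p : ℝ × ℝ ↦ ENNReal.ofReal (Real.exp (κ * |p.1 * p.2|))).aemeasurable]
  have hinner : ∀ x : ℝ,
      (∫⁻ y, ENNReal.ofReal (Real.exp (κ * |x * y|)) ∂(gaussianReal 0 1))
        = ENNReal.ofReal (2 * (Real.exp ((κ * |x|) ^ 2 / 2) * stdNormalCDF (κ * |x|))) := by
    intro x
    rw [← lintegral_exp_abs_gaussian (κ * |x|)]
    exact lintegral_congr fun y ↦ by rw [abs_mul, mul_assoc]
  simp_rw [hinner]
  rw [gaussianReal_of_var_ne_zero 0 one_ne_zero,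
    lintegral_withDensity_eq_lintegral_mul _ (measurable_gaussianPDF 0 1) hm2]
  refine lintegral_congr fun x ↦ ?_
  simp only [Pi.mul_apply, gaussianPDF, ← npdf_eq_gaussian]
  rw [← ENNReal.ofReal_mul (npdf_nonneg x)]

end StdNormalAux

open StdNormalAux in
theorem stmt_5 :
    (∀ κ : ℝ, κ ∈ Set.Ioo (0:ℝ) 1 →
      (∫⁻ p : ℝ × ℝ, ENNReal.ofReal (Real.exp (κ * |p.1 * p.2|))
          ∂((gaussianReal 0 1).prod (gaussianReal 0 1)))
        = ENNReal.ofReal (4 * ∫ x in Set.Ioi (0:ℝ),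
            (1 / Real.sqrt (2 * π)) * Real.exp (-(1/2) * (1 - κ ^ 2) * x ^ 2) *
              stdNormalCDF (κ * x)) ∧
      (∫⁻ p : ℝ × ℝ, ENNReal.ofReal (Real.exp (κ * |p.1 * p.2|))
          ∂((gaussianReal 0 1).prod (gaussianReal 0 1))) < ⊤) ∧
    (∀ κ : ℝ, 1 ≤ κ →
      (∫⁻ p : ℝ × ℝ, ENNReal.ofReal (Real.exp (κ * |p.1 * p.2|))
          ∂((gaussianReal 0 1).prod (gaussianReal 0 1))) = ⊤) := by
  constructor
  · intro κ hκ
    obtain ⟨hκ0, hκ1⟩ := hκ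
    set h : ℝ → ℝ := fun x ↦
      npdf x * (2 * (Real.exp ((κ * |x|) ^ 2 / 2) * stdNormalCDF (κ * |x|))) with hh
    have hm : Measurable fun x : ℝ ↦ κ * |x| := measurable_abs.const_mul κ
    have hmeas_h : Measurable h :=
      continuous_npdf.measurable.mul (((Real.measurable_exp.comp
        ((hm.pow_const 2).div_const 2)).mul (measurable_Phi.comp hm)).const_mul 2)
    have h_nonneg : ∀ x, 0 ≤ h x := fun x ↦
      mul_nonneg (npdf_nonneg x) (mul_nonneg (by norm_num)
        (mul_nonneg (Real.exp_pos _).le (Phi_nonneg _)))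
    have hid : ∀ x : ℝ, h x
        = 2 * ((1 / Real.sqrt (2 * π)) * Real.exp (-((1 - κ ^ 2) / 2) * x ^ 2))
          * stdNormalCDF (κ * |x|) := by
      intro x
      rw [hh]
      simp only [npdf]
      rw [mul_pow, sq_abs,
        show -((1 - κ ^ 2) / 2) * x ^ 2 = -x ^ 2 / 2 + κ ^ 2 * x ^ 2 / 2 by ring,
        Real.exp_add]
      ring
    have hb : (0:ℝ) < (1 - κ ^ 2) / 2 := by nlinarith
    have hInt : Integrable h := by
      refine Integrable.mono'
        (g := fun x ↦ (2 * (1 / Real.sqrt (2 * π))) * Real.exp (-((1 - κ ^ 2) / 2) * x ^ 2))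
        ((integrable_exp_neg_mul_sq hb).const_mul _)
        hmeas_h.aestronglyMeasurable (ae_of_all _ fun x ↦ ?_)
      rw [Real.norm_eq_abs, abs_of_nonneg (h_nonneg x), hid]
      have h1 := Phi_le_one (κ * |x|)
      have h2 := Phi_nonneg (κ * |x|)
      have h3 : (0:ℝ) < (1 / Real.sqrt (2 * π)) * Real.exp (-((1 - κ ^ 2) / 2) * x ^ 2) := by
        positivity
      nlinarith
    have heq : (∫⁻ p : ℝ × ℝ, ENNReal.ofReal (Real.exp (κ * |p.1 * p.2|))
          ∂((gaussianReal 0 1).prod (gaussianReal 0 1)))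
        = ENNReal.ofReal (4 * ∫ x in Set.Ioi (0:ℝ),
            (1 / Real.sqrt (2 * π)) * Real.exp (-(1/2) * (1 - κ ^ 2) * x ^ 2) *
              stdNormalCDF (κ * x)) := by
      rw [main_reduction κ, ← ofReal_integral_eq_lintegral_ofReal hInt
        (ae_of_all _ h_nonneg)]
      congr 1
      have heven : (fun x ↦ h x) = fun x ↦
          (fun t ↦ npdf t * (2 * (Real.exp ((κ * t) ^ 2 / 2) * stdNormalCDF (κ * t)))) |x| := by
        funext x
        simp only [hh, ← npdf_abs x]
      calc ∫ x, h x
          = 2 * ∫ t in Set.Ioi (0:ℝ),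
              npdf t * (2 * (Real.exp ((κ * t) ^ 2 / 2) * stdNormalCDF (κ * t))) := by
            rw [heven]
            exact _root_.integral_comp_abs
              (f := fun t ↦ npdf t * (2 * (Real.exp ((κ * t) ^ 2 / 2) * stdNormalCDF (κ * t))))
        _ = 4 * ∫ x in Set.Ioi (0:ℝ),
              (1 / Real.sqrt (2 * π)) * Real.exp (-(1/2) * (1 - κ ^ 2) * x ^ 2) *
                stdNormalCDF (κ * x) := by
            rw [show (fun t ↦ npdf t * (2 * (Real.exp ((κ * t) ^ 2 / 2) * stdNormalCDF (κ * t))))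
                = fun t ↦ 2 * ((1 / Real.sqrt (2 * π)) *
                    Real.exp (-(1/2) * (1 - κ ^ 2) * t ^ 2) * stdNormalCDF (κ * t)) from
              funext fun t ↦ by
                simp only [npdf]
                rw [mul_pow,
                  show -(1/2) * (1 - κ ^ 2) * t ^ 2 = -t ^ 2 / 2 + κ ^ 2 * t ^ 2 / 2 by ring,
                  Real.exp_add]
                ring]
            rw [MeasureTheory.integral_const_mul]
            ring
    exact ⟨heq, heq ▸ ENNReal.ofReal_lt_top⟩
  · intro κ hκ
    rw [main_reduction κ]
    set c0 : ℝ := 1 / Real.sqrt (2 * π) * stdNormalCDF 0 with hc0def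
    have hc0 : 0 < c0 := by
      have := Phi_zero_pos
      positivity
    have key : ∀ x : ℝ,
        c0 ≤ npdf x * (2 * (Real.exp ((κ * |x|) ^ 2 / 2) * stdNormalCDF (κ * |x|))) := by
      intro x
      have hκ0 : (0:ℝ) ≤ κ := le_trans zero_le_one hκ
      have e1 : Real.exp (-x ^ 2 / 2) * Real.exp ((κ * |x|) ^ 2 / 2)
          = Real.exp ((κ ^ 2 - 1) * x ^ 2 / 2) := by
        rw [← Real.exp_add]
        congr 1
        rw [mul_pow, sq_abs]
        ring
      have e2 : (1:ℝ) ≤ Real.exp ((κ ^ 2 - 1) * x ^ 2 / 2) :=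
        Real.one_le_exp (div_nonneg (mul_nonneg (by nlinarith) (sq_nonneg x)) (by norm_num))
      have e3 : stdNormalCDF 0 ≤ stdNormalCDF (κ * |x|) := Phi_mono (by positivity)
      have e4 : 0 < stdNormalCDF 0 := Phi_zero_pos
      have hc : (0:ℝ) < 1 / Real.sqrt (2 * π) := by positivity
      calc c0 = 1 / Real.sqrt (2 * π) * (1 * stdNormalCDF 0) := by rw [hc0def]; ring
        _ ≤ 1 / Real.sqrt (2 * π)
            * (Real.exp ((κ ^ 2 - 1) * x ^ 2 / 2) * stdNormalCDF (κ * |x|)) :=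
          mul_le_mul_of_nonneg_left (mul_le_mul e2 e3 e4.le (Real.exp_pos _).le) hc.le
        _ ≤ 1 / Real.sqrt (2 * π)
            * (2 * (Real.exp ((κ ^ 2 - 1) * x ^ 2 / 2) * stdNormalCDF (κ * |x|))) := by
          refine mul_le_mul_of_nonneg_left ?_ hc.le
          have : (0:ℝ) ≤ Real.exp ((κ ^ 2 - 1) * x ^ 2 / 2) * stdNormalCDF (κ * |x|) :=
            mul_nonneg (Real.exp_pos _).le (Phi_nonneg _)
          linarith
        _ = npdf x * (2 * (Real.exp ((κ * |x|) ^ 2 / 2) * stdNormalCDF (κ * |x|))) := by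
          rw [npdf, ← e1]
          ring
    have hle : ∫⁻ _ : ℝ, ENNReal.ofReal c0 ∂volume
        ≤ ∫⁻ x, ENNReal.ofReal
            (npdf x * (2 * (Real.exp ((κ * |x|) ^ 2 / 2) * stdNormalCDF (κ * |x|)))) :=
      lintegral_mono fun x ↦ ENNReal.ofReal_le_ofReal (key x)
    rw [lintegral_const, Real.volume_univ,
      ENNReal.mul_top (ENNReal.ofReal_pos.mpr hc0).ne'] at hle
    exact top_le_iff.mp hle
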